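/- Let K be a number field of degree d with T₂-norm ‖·‖, let 𝔭₁,…,𝔭_n be distinct nonzero primes of O_K, let zᵢ ≥ 0 be integers, rᵢ ∈ O_K, and let c ∈ ∏ᵢ J_i^{zᵢ} (with J_i = (y − rᵢ, 𝔭ᵢ)) be a polynomial such that ‖c(m)‖ < F whenever ‖m‖ ≤ B. Then any m ∈ O_K with ‖m‖ ≤ B whose agreement weights aᵢ (aᵢ = 1 if m ≡ rᵢ mod 𝔭ᵢ, else 0) satisfy Σᵢ aᵢ·zᵢ·log N(𝔭ᵢ) > −(d/2)·log d + d·log F is a root of c, i.e. c(m) = 0. -/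

import Mathlib

open NumberField Polynomial

open scoped Classical

private lemma ideal_map_finset_prod {R S : Type*} [CommRing R] [CommRing S] (f : R →+* S)
    {ι : Type*} (s : Finset ι) (I : ι → Ideal R) :
    Ideal.map f (∏ i ∈ s, I i) = ∏ i ∈ s, Ideal.map f (I i) := by
  induction s using Finset.cons_induction with
  | empty => simpa using Ideal.map_top f
  | cons a s ha ih => rw [Finset.prod_cons, Finset.prod_cons, Ideal.map_mul, ih]

private lemma ideal_prod_le_prod {R : Type*} [CommRing R] {ι : Type*} (s : Finset ι)
    (I J : ι → Ideal R) (h : ∀ i ∈ s, I i ≤ J i) :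
    ∏ i ∈ s, I i ≤ ∏ i ∈ s, J i := by
  induction s using Finset.cons_induction with
  | empty => exact le_refl _
  | cons a s ha ih =>
    rw [Finset.prod_cons, Finset.prod_cons]
    exact Ideal.mul_mono (h a (Finset.mem_cons_self _ _))
      (ih fun i hi => h i (Finset.mem_cons_of_mem hi))

/-- Let `𝔭 1, …, 𝔭 n` be distinct nonzero primes of `𝓞 K`, `z i ≥ 0`
integers, `r i ∈ 𝓞 K`, and `c ∈ ∏ i, (J i)^(z i)` (with `J i = (y − r i, 𝔭 i)`) a
polynomial such that `‖c(m)‖ < F` whenever `‖m‖ ≤ B`. Then any `m ∈ 𝓞 K` with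
`‖m‖ ≤ B` whose agreement weights `a i` (`a i = 1` if `m ≡ r i mod 𝔭 i`, else `0`)
satisfy `Σ i, a i · z i · log N(𝔭 i) > −(d/2)·log d + d·log F` is a root of `c`. -/
theorem eval_eq_zero_of_weighted_agreement
    (K : Type*) [Field K] [NumberField K]
    (n : ℕ) (𝔭 : Fin n → Ideal (𝓞 K)) (hprime : ∀ i, (𝔭 i).IsPrime)
    (hne : ∀ i, 𝔭 i ≠ ⊥) (hdist : Function.Injective 𝔭)
    (r : Fin n → 𝓞 K) (z : Fin n → ℕ) (B F : ℝ)
    (c : Polynomial (𝓞 K))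
    (hc : c ∈ ∏ i, (Ideal.span ({X - C (r i)} ∪ C '' ((𝔭 i : Set (𝓞 K)))) :
        Ideal (Polynomial (𝓞 K))) ^ (z i))
    (hbound : ∀ m : 𝓞 K, Real.sqrt (∑ φ : K →+* ℂ, ‖φ (m : K)‖ ^ 2) ≤ B →
        Real.sqrt (∑ φ : K →+* ℂ, ‖φ ((c.eval m : 𝓞 K) : K)‖ ^ 2) < F)
    (m : 𝓞 K) (hm : Real.sqrt (∑ φ : K →+* ℂ, ‖φ (m : K)‖ ^ 2) ≤ B)
    (hagree : ∑ i, ((if m - r i ∈ 𝔭 i then 1 else 0 : ℝ)) * (z i) *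
          Real.log (Ideal.absNorm (𝔭 i)) >
        -(Module.finrank ℚ K : ℝ) / 2 * Real.log (Module.finrank ℚ K) +
          (Module.finrank ℚ K : ℝ) * Real.log F) :
    c.eval m = 0 := by
  by_contra hx
  have hd0 : 0 < Module.finrank ℚ K := Module.finrank_pos
  set d : ℕ := Module.finrank ℚ K with hd
  set x : 𝓞 K := c.eval m with hxdef
  have hF : 0 < F := lt_of_le_of_lt (Real.sqrt_nonneg _) (hbound m hm)
  -- agreement exponents
  set e : Fin n → ℕ := fun i => if m - r i ∈ 𝔭 i then z i else 0 with he
  -- Step A : `x ∈ ∏ i, 𝔭 i ^ e i`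
  have hmemmap : x ∈ Ideal.map (Polynomial.evalRingHom m)
      (∏ i, (Ideal.span ({X - C (r i)} ∪ C '' ((𝔭 i : Set (𝓞 K)))) :
        Ideal (Polynomial (𝓞 K))) ^ (z i)) := Ideal.mem_map_of_mem _ hc
  have hJle : ∀ i, m - r i ∈ 𝔭 i →
      Ideal.map (Polynomial.evalRingHom m)
        (Ideal.span ({X - C (r i)} ∪ C '' ((𝔭 i : Set (𝓞 K))))) ≤ 𝔭 i := by
    intro i hi
    rw [Ideal.map_span, Ideal.span_le]
    rintro y hy
    simp only [Set.image_union, Set.image_singleton, Set.mem_union, Set.mem_singleton_iff,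
      Set.image_image, Set.mem_image] at hy
    rcases hy with h | ⟨p, hp, rfl⟩
    · subst h
      simpa using hi
    · simpa using hp
  have key : x ∈ ∏ i, 𝔭 i ^ e i := by
    have hmap : Ideal.map (Polynomial.evalRingHom m)
        (∏ i, (Ideal.span ({X - C (r i)} ∪ C '' ((𝔭 i : Set (𝓞 K)))) :
          Ideal (Polynomial (𝓞 K))) ^ (z i)) ≤ ∏ i, 𝔭 i ^ e i := by
      rw [ideal_map_finset_prod]
      refine ideal_prod_le_prod _ _ _ fun i _ => ?_
      rw [Ideal.map_pow]
      by_cases hi : m - r i ∈ 𝔭 i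
      · simp only [he, hi, if_pos]
        exact Ideal.pow_right_mono (hJle i hi) _
      · simp only [he, hi, if_neg, not_false_iff, pow_zero, Ideal.one_eq_top]
        exact le_top
    exact hmap hmemmap
  -- Step B : norms
  set Nx : ℕ := Ideal.absNorm (Ideal.span {x}) with hNx
  have hNx0 : Nx ≠ 0 := by
    rw [hNx, Ne, Ideal.absNorm_eq_zero_iff, Ideal.span_singleton_eq_bot]
    exact hx
  have hNx1 : (1 : ℕ) ≤ Nx := Nat.one_le_iff_ne_zero.mpr hNx0
  have hdvd : (∏ i, Ideal.absNorm (𝔭 i) ^ e i) ∣ Nx := by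
    have h := Ideal.absNorm_dvd_absNorm_of_le
      ((Ideal.span_singleton_le_iff_mem _).mpr key)
    simpa only [map_prod, map_pow] using h
  have hPle : (∏ i, Ideal.absNorm (𝔭 i) ^ e i) ≤ Nx :=
    Nat.le_of_dvd (Nat.pos_of_ne_zero hNx0) hdvd
  -- the product of the absolute values of the embeddings of `x` is `Nx`
  have hxK : (x : K) ≠ 0 := by
    simpa using (RingOfIntegers.coe_injective (K := K)).ne hx
  have hprod : ∏ φ : K →+* ℂ, ‖φ (x : K)‖ = (Nx : ℝ) := by
    have h1 : (algebraMap ℚ ℂ) (Algebra.norm ℚ (x : K)) = ∏ σ : K →ₐ[ℚ] ℂ, σ (x : K) :=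
      Algebra.norm_eq_prod_embeddings ℚ ℂ _
    have h2 : ∏ φ : K →+* ℂ, ‖φ (x : K)‖
        = ∏ σ : K →ₐ[ℚ] ℂ, ‖σ (x : K)‖ :=
      Fintype.prod_equiv (RingHom.equivRatAlgHom K ℂ) _ _ (fun φ => rfl)
    have h3 : ∏ σ : K →ₐ[ℚ] ℂ, ‖σ (x : K)‖
        = ‖(algebraMap ℚ ℂ) (Algebra.norm ℚ (x : K))‖ := by
      rw [h1, norm_prod]
    have h4 : ‖(algebraMap ℚ ℂ) (Algebra.norm ℚ (x : K))‖
        = |((Algebra.norm ℚ (x : K) : ℚ) : ℝ)| := by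
      rw [show (algebraMap ℚ ℂ) (Algebra.norm ℚ (x : K))
          = ((Algebra.norm ℚ (x : K) : ℚ) : ℂ) from rfl]
      rw [← Complex.ofReal_ratCast, Complex.norm_real, Real.norm_eq_abs]
    have h5 : Algebra.norm ℚ ((x : 𝓞 K) : K) = ((Algebra.norm ℤ x : ℤ) : ℚ) :=
      (Algebra.coe_norm_int x).symm
    have h6 : Nx = (Algebra.norm ℤ x).natAbs := by
      rw [hNx, Ideal.absNorm_span_singleton]
    rw [h2, h3, h4, h5, h6]
    push_cast [Nat.cast_natAbs]
    norm_num
  -- total sum of squares and AM-GM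
  set t : (K →+* ℂ) → ℝ := fun φ => ‖φ (x : K)‖ ^ 2 with ht
  have htn : ∀ φ, 0 ≤ t φ := fun φ => sq_nonneg _
  have hcard : Fintype.card (K →+* ℂ) = d := NumberField.Embeddings.card K ℂ
  have hAM : ∏ φ : K →+* ℂ, t φ ^ ((d : ℝ)⁻¹) ≤ ∑ φ : K →+* ℂ, (d : ℝ)⁻¹ * t φ := by
    refine Real.geom_mean_le_arith_mean_weighted Finset.univ (fun _ => (d : ℝ)⁻¹) t
      (fun _ _ => by positivity) ?_ (fun φ _ => htn φ)
    rw [Finset.sum_const, Finset.card_univ, hcard, nsmul_eq_mul]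
    field_simp
  have hLHS : ((Nx : ℝ) ^ 2) ^ ((d : ℝ)⁻¹) = ∏ φ : K →+* ℂ, t φ ^ ((d : ℝ)⁻¹) := by
    rw [Real.finset_prod_rpow _ _ (fun φ _ => htn φ)]
    congr 1
    rw [ht, ← hprod, ← Finset.prod_pow]
  have hsum_lt : ∑ φ : K →+* ℂ, t φ < F ^ 2 := by
    have h := hbound m hm
    have hs : 0 ≤ ∑ φ : K →+* ℂ, t φ := Finset.sum_nonneg fun φ _ => htn φ
    nlinarith [Real.sq_sqrt hs, Real.sqrt_nonneg (∑ φ : K →+* ℂ, t φ)]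
  have hmain : ((Nx : ℝ) ^ 2) ^ ((d : ℝ)⁻¹) < (d : ℝ)⁻¹ * F ^ 2 := by
    calc ((Nx : ℝ) ^ 2) ^ ((d : ℝ)⁻¹) ≤ ∑ φ : K →+* ℂ, (d : ℝ)⁻¹ * t φ := by
          rw [hLHS]; exact hAM
      _ = (d : ℝ)⁻¹ * ∑ φ : K →+* ℂ, t φ := by rw [Finset.mul_sum]
      _ < (d : ℝ)⁻¹ * F ^ 2 := by
          have : (0 : ℝ) < (d : ℝ)⁻¹ := by positivity
          exact mul_lt_mul_of_pos_left hsum_lt this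
  -- take logarithms
  have hdR : (0 : ℝ) < d := by exact_mod_cast hd0
  have hNxR : (1 : ℝ) ≤ (Nx : ℝ) := by exact_mod_cast hNx1
  have hNxpos : (0 : ℝ) < (Nx : ℝ) := lt_of_lt_of_le one_pos hNxR
  have hlog : (d : ℝ)⁻¹ * (2 * Real.log Nx) < 2 * Real.log F - Real.log d := by
    have hl := Real.log_lt_log (by positivity) hmain
    rw [Real.log_rpow (by positivity), Real.log_pow] at hl
    rw [Real.log_mul (by positivity) (by positivity), Real.log_inv, Real.log_pow] at hl
    push_cast at hl ⊢
    linarith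
  have hlogNx : Real.log Nx < (d : ℝ) * Real.log F - (d : ℝ) / 2 * Real.log d := by
    have hdne : (d : ℝ) ≠ 0 := ne_of_gt hdR
    have h3 := mul_lt_mul_of_pos_left hlog (by positivity : (0 : ℝ) < (d : ℝ) / 2)
    have hL : (d : ℝ) / 2 * ((d : ℝ)⁻¹ * (2 * Real.log Nx)) = Real.log Nx := by
      field_simp
    have hR : (d : ℝ) / 2 * (2 * Real.log F - Real.log d)
        = (d : ℝ) * Real.log F - (d : ℝ) / 2 * Real.log d := by ring
    rw [hL, hR] at h3
    exact h3
  -- lower bound on log Nx from the agreement sum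
  have hPpos : ∀ i : Fin n, (Ideal.absNorm (𝔭 i) : ℝ) ≠ 0 := by
    intro i
    have : Ideal.absNorm (𝔭 i) ≠ 0 := by
      rw [Ne, Ideal.absNorm_eq_zero_iff]
      exact hne i
    exact_mod_cast this
  have hsum_eq : ∑ i, ((if m - r i ∈ 𝔭 i then 1 else 0 : ℝ)) * (z i) *
      Real.log (Ideal.absNorm (𝔭 i)) = Real.log (∏ i, Ideal.absNorm (𝔭 i) ^ e i) := by
    push_cast
    rw [Real.log_prod (fun i _ => pow_ne_zero _ (hPpos i))]
    refine Finset.sum_congr rfl fun i _ => ?_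
    rw [Real.log_pow]
    by_cases hi : m - r i ∈ 𝔭 i <;> simp [he, hi] <;> ring
  have hle : Real.log (∏ i, (Ideal.absNorm (𝔭 i) : ℝ) ^ e i) ≤ Real.log Nx := by
    have hcast : (∏ i, (Ideal.absNorm (𝔭 i) : ℝ) ^ e i)
        = ((∏ i, Ideal.absNorm (𝔭 i) ^ e i : ℕ) : ℝ) := by push_cast; ring
    rw [hcast]
    apply Real.log_le_log
    · have : 0 < ∏ i, Ideal.absNorm (𝔭 i) ^ e i := by
        apply Finset.prod_pos
        intro i _
        exact pow_pos (Nat.pos_of_ne_zero fun h => hPpos i (by exact_mod_cast h)) _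
      exact_mod_cast this
    · exact_mod_cast hPle
  rw [hsum_eq] at hagree
  linarith
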